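/- Let c: ℝ → ℝ, k > 0, and let e, f: ℝ → ℝ be differentiable with e > 0, f > 0, e'(x) = e(x)·x/((c(x) − x)(x + 1)) and f'(x) = f(x)/(c(x) − x) wherever c(x) ≠ x and x ≠ −1. For ρ > 0 set π = p/ρ, r(ρ,p) = ρ/e(π), s(ρ,p) = k ln(f(π)/ρ), ε(ρ,p) = e(π) − 1, Θ(ρ,p) = π e(π)/k. Then at any (ρ,p) with ρ > 0, c(π) ≠ π and π ≠ −1: (i) p = k r Θ; (ii) Θ ∂_ρ s = ∂_ρ ε + p ∂_ρ(1/r) and Θ ∂_p s = ∂_p ε + p ∂_p(1/r). -/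

import Mathlib

set_option maxHeartbeats 2000000 in
theorem stmt_13 (c e f : ℝ → ℝ) (k : ℝ) (hk : 0 < k)
    (he : Differentiable ℝ e) (hf : Differentiable ℝ f)
    (hepos : ∀ x, 0 < e x) (hfpos : ∀ x, 0 < f x)
    (he' : ∀ x, c x ≠ x → x ≠ -1 → deriv e x = e x * x / ((c x - x) * (x + 1)))
    (hf' : ∀ x, c x ≠ x → x ≠ -1 → deriv f x = f x / (c x - x))
    (ρ p : ℝ) (hρ : 0 < ρ) (hc : c (p / ρ) ≠ p / ρ) (hπ : p / ρ ≠ -1) :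
    p = k * (ρ / e (p / ρ)) * ((p / ρ) * e (p / ρ) / k) ∧
      ((p / ρ) * e (p / ρ) / k) *
          fderiv ℝ (fun q : ℝ × ℝ => k * Real.log (f (q.2 / q.1) / q.1)) (ρ, p) (1, 0) =
        fderiv ℝ (fun q : ℝ × ℝ => e (q.2 / q.1) - 1) (ρ, p) (1, 0) +
          p * fderiv ℝ (fun q : ℝ × ℝ => 1 / (q.1 / e (q.2 / q.1))) (ρ, p) (1, 0) ∧
      ((p / ρ) * e (p / ρ) / k) *
          fderiv ℝ (fun q : ℝ × ℝ => k * Real.log (f (q.2 / q.1) / q.1)) (ρ, p) (0, 1) =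
        fderiv ℝ (fun q : ℝ × ℝ => e (q.2 / q.1) - 1) (ρ, p) (0, 1) +
          p * fderiv ℝ (fun q : ℝ × ℝ => 1 / (q.1 / e (q.2 / q.1))) (ρ, p) (0, 1) := by
  have hρ0 : ρ ≠ 0 := ne_of_gt hρ
  have hk0 : k ≠ 0 := ne_of_gt hk
  set π : ℝ := p / ρ with hπdef
  have he0 : e π ≠ 0 := ne_of_gt (hepos π)
  have hf0 : f π ≠ 0 := ne_of_gt (hfpos π)
  have hcπ : c π - π ≠ 0 := sub_ne_zero.mpr hc
  have h1π : π + 1 ≠ 0 := fun h => hπ (by linarith)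
  -- derivative of q ↦ (q.1)⁻¹
  have hinv1 : HasFDerivAt (fun q : ℝ × ℝ => (q.1)⁻¹)
      ((-(ρ ^ 2)⁻¹) • ContinuousLinearMap.fst ℝ ℝ ℝ) (ρ, p) :=
    (hasDerivAt_inv hρ0).comp_hasFDerivAt (ρ, p) hasFDerivAt_fst
  -- derivative of q ↦ q.2 / q.1
  have hπ' : HasFDerivAt (fun q : ℝ × ℝ => q.2 / q.1)
      (p • ((-(ρ ^ 2)⁻¹) • ContinuousLinearMap.fst ℝ ℝ ℝ)
        + ρ⁻¹ • ContinuousLinearMap.snd ℝ ℝ ℝ) (ρ, p) := by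
    simpa [div_eq_mul_inv, Pi.mul_def] using (hasFDerivAt_snd.mul hinv1)
  set L : ℝ × ℝ →L[ℝ] ℝ :=
    p • ((-(ρ ^ 2)⁻¹) • ContinuousLinearMap.fst ℝ ℝ ℝ)
        + ρ⁻¹ • ContinuousLinearMap.snd ℝ ℝ ℝ with hL
  -- composition with e and f
  have hE : HasFDerivAt (fun q : ℝ × ℝ => e (q.2 / q.1)) (deriv e π • L) (ρ, p) :=
    (he π).hasDerivAt.comp_hasFDerivAt (ρ, p) hπ'
  have hF : HasFDerivAt (fun q : ℝ × ℝ => f (q.2 / q.1)) (deriv f π • L) (ρ, p) :=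
    (hf π).hasDerivAt.comp_hasFDerivAt (ρ, p) hπ'
  -- ε
  have hEps : HasFDerivAt (fun q : ℝ × ℝ => e (q.2 / q.1) - 1) (deriv e π • L) (ρ, p) :=
    hE.sub_const 1
  -- 1/r
  have hR : HasFDerivAt (fun q : ℝ × ℝ => 1 / (q.1 / e (q.2 / q.1)))
      (e π • ((-(ρ ^ 2)⁻¹) • ContinuousLinearMap.fst ℝ ℝ ℝ) + ρ⁻¹ • (deriv e π • L))
      (ρ, p) := by
    have h := hE.mul hinv1
    have heq : (fun q : ℝ × ℝ => 1 / (q.1 / e (q.2 / q.1)))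
        = fun q : ℝ × ℝ => e (q.2 / q.1) * (q.1)⁻¹ := by
      funext q; rw [one_div_div, div_eq_mul_inv]
    rw [heq]
    exact h
  -- s
  have hFq : HasFDerivAt (fun q : ℝ × ℝ => f (q.2 / q.1) / q.1)
      (f π • ((-(ρ ^ 2)⁻¹) • ContinuousLinearMap.fst ℝ ℝ ℝ) + ρ⁻¹ • (deriv f π • L))
      (ρ, p) := by
    simpa [div_eq_mul_inv, Pi.mul_def, hπdef] using (hF.mul hinv1)
  have hfρ0 : f π / ρ ≠ 0 := div_ne_zero hf0 hρ0
  have hlog : HasFDerivAt (fun q : ℝ × ℝ => Real.log (f (q.2 / q.1) / q.1))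
      ((f π / ρ)⁻¹ • (f π • ((-(ρ ^ 2)⁻¹) • ContinuousLinearMap.fst ℝ ℝ ℝ)
        + ρ⁻¹ • (deriv f π • L))) (ρ, p) :=
    (Real.hasDerivAt_log hfρ0).comp_hasFDerivAt (h₂ := Real.log) (ρ, p) hFq
  have hS : HasFDerivAt (fun q : ℝ × ℝ => k * Real.log (f (q.2 / q.1) / q.1))
      (k • ((f π / ρ)⁻¹ • (f π • ((-(ρ ^ 2)⁻¹) • ContinuousLinearMap.fst ℝ ℝ ℝ)
        + ρ⁻¹ • (deriv f π • L)))) (ρ, p) :=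
    hlog.const_smul k
  have hde := he' π hc hπ
  have hdf := hf' π hc hπ
  have Lv1 : L (1, 0) = p * -(ρ ^ 2)⁻¹ := by
    simp [hL, ContinuousLinearMap.add_apply, ContinuousLinearMap.smul_apply]
  have Lv2 : L (0, 1) = ρ⁻¹ := by
    simp [hL, ContinuousLinearMap.add_apply, ContinuousLinearMap.smul_apply]
  have hp : p = π * ρ := by rw [hπdef]; field_simp
  refine ⟨by field_simp; rw [hp]; ring, ?_, ?_⟩ <;>
  · rw [hS.fderiv, hEps.fderiv, hR.fderiv]
    simp only [ContinuousLinearMap.add_apply, ContinuousLinearMap.smul_apply,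
      ContinuousLinearMap.coe_fst', ContinuousLinearMap.coe_snd', smul_eq_mul,
      Lv1, Lv2]
    simp only [hde, hdf]
    rw [hp]
    field_simp
    ring
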